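/- Fix q > 0 and X > 8q. Define v(d) = d - d²/(6q) for d ≤ 4q and v(d) = d - d²/(6q) + ((d-4q)/(6q))√d√(d-4q) for d > 4q. Then v(4q) + v(X - 4q) > 2·v(X/2), i.e., splitting an area of length X at distance 4q from one endpoint yields a strictly higher total value than splitting it at the midpoint. -/

import Mathlib

/-- The value of an area of length `d`. -/
noncomputable def areaValue (q d : ℝ) : ℝ :=
  if d ≤ 4 * q then d - d ^ 2 / (6 * q)
  else d - d ^ 2 / (6 * q) + (d - 4 * q) / (6 * q) * Real.sqrt d * Real.sqrt (d - 4 * q)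

/-- For `X > 8q`, splitting an area of length `X` at distance `4q` from one endpoint yields a
strictly higher total value than splitting it at the midpoint. -/
theorem split_at_4q_beats_midpoint (q X : ℝ) (hq : 0 < q) (hX : 8 * q < X) :
    areaValue q (4 * q) + areaValue q (X - 4 * q) > 2 * areaValue q (X / 2) := by
  have h1 : ¬ (X - 4 * q ≤ 4 * q) := by linarith
  have h2 : ¬ (X / 2 ≤ 4 * q) := by linarith
  rw [areaValue, areaValue, areaValue, if_pos (le_refl (4 * q)), if_neg h1, if_neg h2,
    show X - 4 * q - 4 * q = X - 8 * q from by ring]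
  set a := Real.sqrt X with ha0
  set b := Real.sqrt (X - 4 * q) with hb0
  set c := Real.sqrt (X - 8 * q) with hc0
  have hXpos : (0:ℝ) < X := by linarith
  have ha2 : a ^ 2 = X := Real.sq_sqrt (by linarith)
  have hb2 : b ^ 2 = X - 4 * q := Real.sq_sqrt (by linarith)
  have hc2 : c ^ 2 = X - 8 * q := Real.sq_sqrt (by linarith)
  have hapos : 0 < a := Real.sqrt_pos.mpr (by linarith)
  have hbpos : 0 < b := Real.sqrt_pos.mpr (by linarith)
  have hcpos : 0 < c := Real.sqrt_pos.mpr (by linarith)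
  have hm : Real.sqrt (X * (X - 8 * q)) = a * c := by
    rw [ha0, hc0, ← Real.sqrt_mul (by linarith : (0:ℝ) ≤ X)]
  -- product of midpoint sqrts
  have e1 : Real.sqrt (X / 2) * Real.sqrt (X / 2 - 4 * q) = a * c / 2 := by
    rw [← Real.sqrt_mul (by linarith : (0:ℝ) ≤ X / 2),
        show X / 2 * (X / 2 - 4 * q) = (1/2)^2 * (X * (X - 8 * q)) by ring,
        Real.sqrt_mul (by positivity), Real.sqrt_sq (by norm_num), hm]
    ring
  -- concavity: 2b > a + c
  have hac : a * c < X - 4 * q := by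
    rw [← hm, show X - 4 * q = Real.sqrt ((X - 4 * q)^2) from (Real.sqrt_sq (by linarith)).symm]
    apply Real.sqrt_lt_sqrt (by nlinarith)
    nlinarith
  have hsum : (a + c) ^ 2 < (2 * b) ^ 2 := by nlinarith
  have key : a + c < 2 * b := lt_of_pow_lt_pow_left₀ 2 (by positivity) hsum
  rw [gt_iff_lt, ← sub_pos]
  have expand : 2 * (X / 2 - (X / 2) ^ 2 / (6 * q) +
      (X / 2 - 4 * q) / (6 * q) * Real.sqrt (X / 2) * Real.sqrt (X / 2 - 4 * q)) =
      X - X^2 / (12 * q) + (X - 8 * q) / (12 * q) * (a * c) := by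
    rw [mul_assoc, e1]; field_simp; ring
  rw [expand]
  have hid : 4 * q - (4 * q) ^ 2 / (6 * q) +
      (X - 4 * q - (X - 4 * q) ^ 2 / (6 * q) + (X - 8 * q) / (6 * q) * b * c) -
      (X - X ^ 2 / (12 * q) + (X - 8 * q) / (12 * q) * (a * c)) =
      c ^ 3 * (2 * b - a - c) / (12 * q) := by
    have hq' : q ≠ 0 := ne_of_gt hq
    field_simp
    linear_combination (6 * a * c - 12 * b * c + 6 * (c ^ 2 + (X - 8 * q))) * hc2
  rw [hid]
  exact div_pos (mul_pos (pow_pos hcpos 3) (by linarith)) (by linarith)
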